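/- Let t_n ∈ ℝ, let F : (−∞,0] → ℝ be continuous and bounded, let j : ℝ → ℝ be continuously differentiable with j(t) = 0 for all t ≥ t_n, and let w : (−∞,0] → ℝ be continuous and satisfy w(t) = −1 − ∫_t^0 w(ξ) F(t−ξ) dξ for all t ≤ 0. Then the function M defined by M(t) := −∫_t^{t_n} w(t−ξ) j′(ξ) dξ satisfies M(t) = −j(t) − ∫_t^{t_n} M(ξ) F(t−ξ) dξ for all t ≤ t_n. -/

import Mathlib

open MeasureTheory intervalIntegral

/-- Fubini for iterated interval integrals over a triangle. -/
lemma triangle_swap (f : ℝ → ℝ → ℝ) (hf : Continuous fun p : ℝ × ℝ => f p.1 p.2)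
    (a b : ℝ) (hab : a ≤ b) :
    (∫ x in a..b, ∫ y in x..b, f x y) = ∫ y in a..b, ∫ x in a..y, f x y := by
  set μ := volume.restrict (Set.Ioc a b) with hμ
  set g : ℝ → ℝ → ℝ := fun x y => if x ≤ y then f x y else 0 with hg
  obtain ⟨C, hC⟩ : ∃ C, ∀ p ∈ Set.Icc a b ×ˢ Set.Icc a b, ‖f p.1 p.2‖ ≤ C :=
    (IsCompact.exists_bound_of_continuousOn (IsCompact.prod isCompact_Icc isCompact_Icc)
      hf.continuousOn)
  have hgmeas : Measurable (Function.uncurry g) := by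
    apply Measurable.ite _ hf.measurable measurable_const
    exact measurableSet_le measurable_fst measurable_snd
  have hint : Integrable (Function.uncurry g) (μ.prod μ) := by
    refine (integrable_const (max C 0)).mono' hgmeas.aestronglyMeasurable ?_
    have : ∀ᵐ p ∂(μ.prod μ), p ∈ Set.Ioc a b ×ˢ Set.Ioc a b := by
      rw [hμ, Measure.prod_restrict]
      exact ae_restrict_mem (measurableSet_Ioc.prod measurableSet_Ioc)
    filter_upwards [this] with p hp
    rcases hp with ⟨h1, h2⟩
    by_cases h : p.1 ≤ p.2
    · simp only [Function.uncurry, hg, if_pos h]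
      exact le_trans (hC p ⟨⟨h1.1.le, h1.2⟩, ⟨h2.1.le, h2.2⟩⟩) (le_max_left _ _)
    · simp only [Function.uncurry, hg, if_neg h]
      simp [le_max_right C 0]
  have key := integral_integral_swap hint
  have hL : (∫ x, ∫ y, g x y ∂μ ∂μ) = ∫ x in a..b, ∫ y in x..b, f x y := by
    rw [intervalIntegral.integral_of_le hab]
    refine setIntegral_congr_fun measurableSet_Ioc fun x hx => ?_
    have : (fun y => g x y) = (Set.Ici x).indicator (f x) := by
      funext y; simp [hg, Set.indicator, Set.mem_Ici]
    rw [this, hμ, setIntegral_indicator measurableSet_Ici]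
    have hset : Set.Ioc a b ∩ Set.Ici x = Set.Icc x b := by
      ext y; constructor
      · rintro ⟨⟨_, h2⟩, h3⟩; exact ⟨h3, h2⟩
      · rintro ⟨h1, h2⟩; exact ⟨⟨lt_of_lt_of_le hx.1 h1, h2⟩, h1⟩
    rw [hset, integral_Icc_eq_integral_Ioc, intervalIntegral.integral_of_le hx.2]
  have hR : (∫ y, ∫ x, g x y ∂μ ∂μ) = ∫ y in a..b, ∫ x in a..y, f x y := by
    rw [intervalIntegral.integral_of_le hab]
    refine setIntegral_congr_fun measurableSet_Ioc fun y hy => ?_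
    have : (fun x => g x y) = (Set.Iic y).indicator (fun x => f x y) := by
      funext x; simp [hg, Set.indicator, Set.mem_Iic]
    rw [this, hμ, setIntegral_indicator measurableSet_Iic]
    have hset : Set.Ioc a b ∩ Set.Iic y = Set.Ioc a y := by
      ext x; constructor
      · rintro ⟨⟨h1, _⟩, h3⟩; exact ⟨h1, h3⟩
      · rintro ⟨h1, h2⟩; exact ⟨⟨h1, le_trans h2 hy.2⟩, h2⟩
    rw [hset, intervalIntegral.integral_of_le hy.1.le]
  rw [← hL, key, hR]

/-- **Backward auxiliary-function representation** (equations `renewaltemps` and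
`renewalsoltemps` in the proof of the paper's Lemma `renewals`, Appendix B).
If `w` solves `w(t) = −1 − ∫_t^0 w(ξ) F(t−ξ) dξ` on `(−∞,0]` and `j` is C¹ with
`j ≡ 0` on `[t_n, ∞)`, then `M(t) := −∫_t^{t_n} w(t−ξ) j′(ξ) dξ` satisfies
`M(t) = −j(t) − ∫_t^{t_n} M(ξ) F(t−ξ) dξ` for all `t ≤ t_n`. -/
theorem backward_renewal_auxiliary_solution
    (tn : ℝ) (F : ℝ → ℝ)
    (hF : ContinuousOn F (Set.Iic 0))
    (hF_bdd : ∃ C : ℝ, ∀ t ≤ (0 : ℝ), |F t| ≤ C)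
    (j : ℝ → ℝ) (hj : ContDiff ℝ 1 j) (hj0 : ∀ t ≥ tn, j t = 0)
    (w : ℝ → ℝ) (hw : ContinuousOn w (Set.Iic 0))
    (hw_eq : ∀ t ≤ (0 : ℝ), w t = -1 - ∫ ξ in t..(0 : ℝ), w ξ * F (t - ξ)) :
    ∀ t ≤ tn,
      (-∫ ξ in t..tn, w (t - ξ) * deriv j ξ) =
        -j t - ∫ ξ in t..tn, (-∫ η in ξ..tn, w (ξ - η) * deriv j η) * F (t - ξ) := by
  intro t ht
  -- continuous extensions of w and F
  set W : ℝ → ℝ := fun x => w (min x 0) with hWdef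
  set Fc : ℝ → ℝ := fun x => F (min x 0) with hFcdef
  have hmin : Continuous (fun x : ℝ => min x 0) := continuous_id.min continuous_const
  have hWc : Continuous W := hw.comp_continuous hmin (fun x => min_le_right x 0)
  have hFcc : Continuous Fc := hF.comp_continuous hmin (fun x => min_le_right x 0)
  have hW : ∀ x ≤ (0 : ℝ), W x = w x := fun x hx => by
    simp only [hWdef, min_eq_left hx]
  have hFc : ∀ x ≤ (0 : ℝ), Fc x = F x := fun x hx => by
    simp only [hFcdef, min_eq_left hx]
  have hj' : Continuous (deriv j) := hj.continuous_deriv le_rfl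
  have hjd : Differentiable ℝ j := hj.differentiable one_ne_zero
  -- the renewal equation for W
  have hW_eq : ∀ s ≤ (0 : ℝ), W s = -1 - ∫ ξ in s..(0 : ℝ), W ξ * Fc (s - ξ) := by
    intro s hs
    rw [hW s hs, hw_eq s hs]
    congr 1
    apply intervalIntegral.integral_congr
    intro ξ hξ
    rw [Set.uIcc_of_le hs] at hξ
    beta_reduce
    rw [hW ξ hξ.2, hFc (s - ξ) (by linarith [hξ.1])]
  -- replace w, F by W, Fc in the goal
  have hL1 : (∫ ξ in t..tn, w (t - ξ) * deriv j ξ)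
      = ∫ ξ in t..tn, W (t - ξ) * deriv j ξ := by
    apply intervalIntegral.integral_congr
    intro ξ hξ
    rw [Set.uIcc_of_le ht] at hξ
    beta_reduce
    rw [hW (t - ξ) (by linarith [hξ.1])]
  have hR1 : (∫ ξ in t..tn, (-∫ η in ξ..tn, w (ξ - η) * deriv j η) * F (t - ξ))
      = ∫ ξ in t..tn, (-∫ η in ξ..tn, W (ξ - η) * deriv j η) * Fc (t - ξ) := by
    apply intervalIntegral.integral_congr
    intro ξ hξ
    rw [Set.uIcc_of_le ht] at hξ
    beta_reduce
    rw [hFc (t - ξ) (by linarith [hξ.1])]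
    congr 2
    apply intervalIntegral.integral_congr
    intro η hη
    rw [Set.uIcc_of_le hξ.2] at hη
    beta_reduce
    rw [hW (ξ - η) (by linarith [hη.1])]
  rw [hL1, hR1]
  -- the double-integral form of the RHS integral
  have stepA : (∫ ξ in t..tn, (-∫ η in ξ..tn, W (ξ - η) * deriv j η) * Fc (t - ξ))
      = -∫ ξ in t..tn, ∫ η in ξ..tn, Fc (t - ξ) * (W (ξ - η) * deriv j η) := by
    rw [← intervalIntegral.integral_neg]
    apply intervalIntegral.integral_congr
    intro ξ _
    beta_reduce
    rw [intervalIntegral.integral_const_mul]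
    ring
  have hfcont : Continuous fun p : ℝ × ℝ => Fc (t - p.1) * (W (p.1 - p.2) * deriv j p.2) :=
    (hFcc.comp (continuous_const.sub continuous_fst)).mul
      ((hWc.comp (continuous_fst.sub continuous_snd)).mul (hj'.comp continuous_snd))
  have stepB : (∫ ξ in t..tn, ∫ η in ξ..tn, Fc (t - ξ) * (W (ξ - η) * deriv j η))
      = ∫ η in t..tn, ∫ ξ in t..η, Fc (t - ξ) * (W (ξ - η) * deriv j η) :=
    triangle_swap _ hfcont t tn ht
  -- compute the inner integral using the renewal equation for W
  have stepC : ∀ η ∈ Set.uIcc t tn,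
      (∫ ξ in t..η, Fc (t - ξ) * (W (ξ - η) * deriv j η))
        = deriv j η * (-1 - W (t - η)) := by
    intro η hη
    rw [Set.uIcc_of_le ht] at hη
    have h1 : (∫ ξ in t..η, Fc (t - ξ) * (W (ξ - η) * deriv j η))
        = deriv j η * ∫ ξ in t..η, Fc (t - ξ) * W (ξ - η) := by
      rw [← intervalIntegral.integral_const_mul]
      apply intervalIntegral.integral_congr
      intro ξ _; ring
    have h2 : (∫ ξ in t..η, Fc (t - ξ) * W (ξ - η))
        = ∫ u in (t - η)..(t - t), Fc u * W (t - η - u) := by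
      rw [← intervalIntegral.integral_comp_sub_left (fun u => Fc u * W (t - η - u)) t]
      apply intervalIntegral.integral_congr
      intro ξ _
      have : t - η - (t - ξ) = ξ - η := by ring
      simp only [this]
    have h3 : (∫ u in (t - η)..(0 : ℝ), Fc u * W (t - η - u))
        = ∫ u in (t - η)..(0 : ℝ), W u * Fc (t - η - u) := by
      have := intervalIntegral.integral_comp_sub_left
        (a := t - η) (b := (0 : ℝ)) (fun u => W u * Fc (t - η - u)) (t - η)
      simp only [sub_zero, sub_self] at this
      rw [← this]
      apply intervalIntegral.integral_congr
      intro ξ _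
      have h4 : t - η - (t - η - ξ) = ξ := by ring
      simp only [h4]
      ring
    have hs : t - η ≤ 0 := by linarith [hη.1]
    have h5 : (∫ u in (t - η)..(0 : ℝ), W u * Fc (t - η - u)) = -1 - W (t - η) := by
      have := hW_eq (t - η) hs
      linarith [this]
    rw [h1, h2]
    rw [show t - t = (0 : ℝ) by ring, h3, h5]
  have stepC' : (∫ η in t..tn, ∫ ξ in t..η, Fc (t - ξ) * (W (ξ - η) * deriv j η))
      = ∫ η in t..tn, deriv j η * (-1 - W (t - η)) :=
    intervalIntegral.integral_congr stepC
  -- evaluate the remaining integral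
  have i1 : IntervalIntegrable (deriv j) volume t tn := hj'.intervalIntegrable _ _
  have i2 : IntervalIntegrable (fun η => deriv j η * W (t - η)) volume t tn :=
    (hj'.mul (hWc.comp (continuous_const.sub continuous_id))).intervalIntegrable _ _
  have stepD : (∫ η in t..tn, deriv j η * (-1 - W (t - η)))
      = -(j tn - j t) - ∫ η in t..tn, deriv j η * W (t - η) := by
    have : (∫ η in t..tn, deriv j η * (-1 - W (t - η)))
        = ∫ η in t..tn, (-(deriv j η) - deriv j η * W (t - η)) := by
      apply intervalIntegral.integral_congr
      intro η _; ring
    rw [this, intervalIntegral.integral_sub (f := fun η => -(deriv j η)) (hj'.neg.intervalIntegrable _ _) i2,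
      intervalIntegral.integral_neg,
      intervalIntegral.integral_deriv_eq_sub (fun x _ => hjd x) i1]
  have hjtn : j tn = 0 := hj0 tn le_rfl
  have hfinal : (∫ η in t..tn, W (t - η) * deriv j η)
      = ∫ η in t..tn, deriv j η * W (t - η) := by
    apply intervalIntegral.integral_congr
    intro η _; ring
  rw [stepA, stepB, stepC', stepD, hjtn, hfinal]
  ring
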